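/- Let m ≥ 3, let r > 2 be real, and place m candidates in ℝ^{m−1} by y_i = e_i for 1 ≤ i ≤ m−1 and y_m = (r, r, …, r). If a randomized single-winner scv mechanism f for these candidates and n voters is anonymous, strategy-proof, and has finite distortion on this candidate configuration, then f is the Random Dictator mechanism: for every action profile, each candidate y_k is elected with probability n_k/n, where n_k is the number of votes for candidate k. -/

import Mathlib

open Finset

/-- Cost of a point `z` when the pair of candidates `(y k, y l)` is elected:
the distance to the closer of the two winners. -/
noncomputable def pairCost {α : Type*} [PseudoMetricSpace α] {m : ℕ}
    (y : Fin m → α) (k l : Fin m) (z : α) : ℝ :=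
  min (dist z (y k)) (dist z (y l))

/-- Social cost of the pair `(y k, y l)` on the location profile `x`. -/
noncomputable def socialCost {α : Type*} [PseudoMetricSpace α] {m n : ℕ}
    (y : Fin m → α) (k l : Fin m) (x : Fin n → α) : ℝ :=
  ∑ i, pairCost y k l (x i)

/-- Optimal social cost over all pairs of distinct candidates. -/
noncomputable def OPT {α : Type*} [PseudoMetricSpace α] {m n : ℕ}
    (y : Fin m → α) (x : Fin n → α) : ℝ :=
  sInf {c : ℝ | ∃ k l : Fin m, k ≠ l ∧ c = socialCost y k l x}

/-- A location profile `x` is consistent with an action profile `a` if every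
voter votes for (one of) her nearest candidate(s). -/
def Consistent {α : Type*} [PseudoMetricSpace α] {m n : ℕ}
    (y : Fin m → α) (a : Fin n → Fin m) (x : Fin n → α) : Prop :=
  ∀ (i : Fin n) (k : Fin m), dist (x i) (y (a i)) ≤ dist (x i) (y k)

/-- Number of votes received by candidate `k` under action profile `a`. -/
def votes {m n : ℕ} (a : Fin n → Fin m) (k : Fin m) : ℕ :=
  (univ.filter fun i => a i = k).card

/-- The candidate configuration of Instance 3 of the paper: in `ℝ^(m-1)`,
candidate `i` (for `i < m - 1`) sits at the `i`-th standard basis vector, and the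
last candidate sits at `(r, r, ..., r)`. -/
noncomputable def multiCand (m : ℕ) (r : ℝ) : Fin m → EuclideanSpace ℝ (Fin (m - 1)) :=
  fun k =>
    if h : (k : ℕ) < m - 1 then EuclideanSpace.single (⟨(k : ℕ), h⟩ : Fin (m - 1)) (1 : ℝ)
    else (WithLp.equiv 2 (Fin (m - 1) → ℝ)).symm (fun _ => r)

/-- Social cost of the single winner `y k` on location profile `x`. -/
noncomputable def scost1 {α : Type*} [PseudoMetricSpace α] {m n : ℕ}
    (y : Fin m → α) (k : Fin m) (x : Fin n → α) : ℝ :=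
  ∑ i, dist (x i) (y k)

/-- Optimal social cost over single winners. -/
noncomputable def OPT1 {α : Type*} [PseudoMetricSpace α] {m n : ℕ}
    (y : Fin m → α) (x : Fin n → α) : ℝ :=
  sInf {c : ℝ | ∃ k : Fin m, c = scost1 y k x}

/-- `f` is a randomized single-winner mechanism: it gives a probability
distribution over the candidates. -/
def IsRandMech1 {m n : ℕ} (f : (Fin n → Fin m) → Fin m → ℝ) : Prop :=
  ∀ a : Fin n → Fin m, (∀ k, 0 ≤ f a k) ∧ ∑ k, f a k = 1

/-- Expected cost of the point `z` under the single-winner lottery `f a`. -/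
noncomputable def expCost1 {α : Type*} [PseudoMetricSpace α] {m n : ℕ}
    (y : Fin m → α) (f : (Fin n → Fin m) → Fin m → ℝ)
    (a : Fin n → Fin m) (z : α) : ℝ :=
  ∑ k, f a k * dist z (y k)

/-- Expected social cost of the single-winner mechanism `f`. -/
noncomputable def expSC1 {α : Type*} [PseudoMetricSpace α] {m n : ℕ}
    (y : Fin m → α) (f : (Fin n → Fin m) → Fin m → ℝ)
    (a : Fin n → Fin m) (x : Fin n → α) : ℝ :=
  ∑ k, f a k * scost1 y k x

/-- Strategy-proofness of a randomized single-winner mechanism. -/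
def RandSP1 {α : Type*} [PseudoMetricSpace α] {m n : ℕ}
    (y : Fin m → α) (f : (Fin n → Fin m) → Fin m → ℝ) : Prop :=
  ∀ (i : Fin n) (xi : α) (a : Fin n → Fin m) (astar ai' : Fin m),
    (∀ k, dist xi (y astar) ≤ dist xi (y k)) →
    expCost1 y f (Function.update a i astar) xi ≤
      expCost1 y f (Function.update a i ai') xi

noncomputable section
namespace AuxRD

def pt {N : ℕ} (g : Fin N → ℝ) : EuclideanSpace ℝ (Fin N) :=
  (WithLp.equiv 2 (Fin N → ℝ)).symm g

@[simp] lemma pt_apply {N : ℕ} (g : Fin N → ℝ) (t : Fin N) : pt g t = g t := rfl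

lemma dist_pt {N : ℕ} (g h : Fin N → ℝ) :
    dist (pt g) (pt h) = Real.sqrt (∑ t, (g t - h t)^2) := by
  rw [EuclideanSpace.dist_eq]
  congr 1
  refine Finset.sum_congr rfl fun t _ => ?_
  rw [Real.dist_eq, sq_abs]
  rfl

lemma sumExcept {ι : Type*} [Fintype ι] [DecidableEq ι] (S : Finset ι) (g : ι → ℝ) (c : ℝ)
    (h : ∀ t ∉ S, g t = c) :
    ∑ t, g t = ∑ t ∈ S, g t + ((Fintype.card ι - S.card : ℕ) : ℝ) * c := by
  rw [← Finset.sum_sdiff (Finset.subset_univ S)]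
  have h1 : ∑ t ∈ (univ \ S), g t = ((Fintype.card ι - S.card : ℕ) : ℝ) * c := by
    rw [Finset.sum_congr rfl (fun t ht => h t (Finset.mem_sdiff.mp ht).2)]
    rw [Finset.sum_const, Finset.card_sdiff_of_subset (Finset.subset_univ S), Finset.card_univ]
    simp [nsmul_eq_mul]
  rw [h1]; ring

lemma sum_support {ι : Type*} [Fintype ι] [DecidableEq ι] (T : Finset ι) (g : ι → ℝ)
    (h : ∀ k ∉ T, g k = 0) : ∑ k, g k = ∑ k ∈ T, g k := by
  refine (Finset.sum_subset (Finset.subset_univ T) ?_).symm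
  exact fun k _ hk => h k hk

def ebas {N : ℕ} (t : Fin N) : EuclideanSpace ℝ (Fin N) := pt (fun s => if s = t then 1 else 0)
def ycon (N : ℕ) (r : ℝ) : EuclideanSpace ℝ (Fin N) := pt (fun _ => r)

lemma mc_eq_ebas {m : ℕ} (r : ℝ) (k : Fin m) (h : (k : ℕ) < m - 1) :
    multiCand m r k = ebas ⟨(k : ℕ), h⟩ := by
  simp only [multiCand, dif_pos h, ebas]
  ext t
  simp [EuclideanSpace.single_apply, pt]

lemma mc_eq_ycon {m : ℕ} (r : ℝ) (k : Fin m) (h : ¬ ((k : ℕ) < m - 1)) :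
    multiCand m r k = ycon (m-1) r := by
  simp only [multiCand, dif_neg h, ycon, pt]

variable {N : ℕ}

def z0 (N : ℕ) : EuclideanSpace ℝ (Fin N) := pt (fun _ => 0)
def z1 (u v : Fin N) : EuclideanSpace ℝ (Fin N) :=
  pt (fun t => if t = u then 1/2 else if t = v then 1/2 else 0)
def z2 (u v w : Fin N) : EuclideanSpace ℝ (Fin N) :=
  pt (fun t => if t = u then 1/2 else if t = v then 1/2 else if t = w then 1/4 else 0)
def z3 (r : ℝ) (u : Fin N) : EuclideanSpace ℝ (Fin N) :=
  pt (fun t => if t = u then (1+r)/2 else r/2)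
def z4 (r : ℝ) (u v w : Fin N) : EuclideanSpace ℝ (Fin N) :=
  pt (fun t => if t = u then (1+r)/2 else if t = v then r/2+1/4 else if t = w then r/2-1/4 else r/2)

def Qv (N : ℕ) (r : ℝ) : ℝ := ((r-1)/2)^2 + ((N-1 : ℕ) : ℝ)*(r/2)^2

lemma Qv_nonneg (N : ℕ) (r : ℝ) : 0 ≤ Qv N r := by
  exact add_nonneg (sq_nonneg _) (mul_nonneg (Nat.cast_nonneg _) (sq_nonneg _))

-- z0 values
lemma v00 (t : Fin N) : dist (z0 N) (ebas t) = 1 := by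
  rw [z0, ebas, dist_pt]
  rw [sumExcept {t} _ 0 (by intro s hs; simp at hs; simp [hs])]
  simp

lemma v01 (r : ℝ) : dist (z0 N) (ycon N r) = Real.sqrt ((N:ℝ) * r^2) := by
  rw [z0, ycon, dist_pt]
  rw [sumExcept ∅ _ ((0-r)^2) (by intro s _; rfl)]
  congr 1
  simp

-- z1 values
lemma v10 (u v : Fin N) (huv : u ≠ v) : dist (z1 u v) (ebas u) = Real.sqrt (1/2) := by
  rw [z1, ebas, dist_pt]
  rw [sumExcept {u, v} _ 0 ?_]
  · rw [Finset.sum_insert (by simp [huv]), Finset.sum_singleton]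
    simp [huv, huv.symm]
    norm_num
  · intro s hs; simp at hs; simp [hs.1, hs.2]

lemma v10' (u v : Fin N) (huv : u ≠ v) : dist (z1 u v) (ebas v) = Real.sqrt (1/2) := by
  rw [z1, ebas, dist_pt]
  rw [sumExcept {u, v} _ 0 ?_]
  · rw [Finset.sum_insert (by simp [huv]), Finset.sum_singleton]
    simp [huv, huv.symm]
    norm_num
  · intro s hs; simp at hs; simp [hs.1, hs.2]

lemma v11 (u v w : Fin N) (huv : u ≠ v) (hwu : w ≠ u) (hwv : w ≠ v) :
    dist (z1 u v) (ebas w) = Real.sqrt (3/2) := by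
  rw [z1, ebas, dist_pt]
  rw [sumExcept {u, v, w} _ 0 ?_]
  · rw [Finset.sum_insert (by simp [huv, hwu.symm]), Finset.sum_insert (by simp [hwv.symm]),
      Finset.sum_singleton]
    simp [huv, huv.symm, hwu, hwu.symm, hwv, hwv.symm]
    norm_num
  · intro s hs; simp at hs; simp [hs.1, hs.2.1, hs.2.2]

lemma v12 (r : ℝ) (u v : Fin N) (huv : u ≠ v) :
    dist (z1 u v) (ycon N r) = Real.sqrt (2*(1/2-r)^2 + ((N-2:ℕ):ℝ)*r^2) := by
  rw [z1, ycon, dist_pt]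
  rw [sumExcept {u, v} _ ((0-r)^2) ?_]
  · rw [Finset.sum_insert (by simp [huv]), Finset.sum_singleton]
    rw [Finset.card_pair huv]
    simp [huv, huv.symm]
    ring
  · intro s hs; simp at hs; simp [hs.1, hs.2]

lemma two_le {N : ℕ} (u v : Fin N) (huv : u ≠ v) : 2 ≤ N := by
  have h := Finset.card_le_univ ({u, v} : Finset (Fin N))
  rw [Fintype.card_fin, Finset.card_pair huv] at h
  exact h

lemma three_le {N : ℕ} (u v w : Fin N) (huv : u ≠ v) (huw : u ≠ w) (hvw : v ≠ w) : 3 ≤ N := by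
  have h := Finset.card_le_univ ({u, v, w} : Finset (Fin N))
  rw [Fintype.card_fin, Finset.card_insert_of_notMem (by simp [huv, huw]),
    Finset.card_pair hvw] at h
  exact h

lemma four_le {N : ℕ} (u v w x : Fin N) (huv : u ≠ v) (huw : u ≠ w) (hvw : v ≠ w)
    (hxu : x ≠ u) (hxv : x ≠ v) (hxw : x ≠ w) : 4 ≤ N := by
  have h := Finset.card_le_univ ({u, v, w, x} : Finset (Fin N))
  rw [Fintype.card_fin, Finset.card_insert_of_notMem (by simp [huv, huw, hxu.symm]),
    Finset.card_insert_of_notMem (by simp [hvw, hxv.symm]), Finset.card_pair (Ne.symm hxw)] at h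
  exact h

lemma card3 {N : ℕ} (u v w : Fin N) (huv : u ≠ v) (huw : u ≠ w) (hvw : v ≠ w) :
    ({u, v, w} : Finset (Fin N)).card = 3 := by
  rw [Finset.card_insert_of_notMem (by simp [huv, huw]), Finset.card_pair hvw]

-- z2 values
lemma v20 (u v w : Fin N) (huv : u ≠ v) (huw : u ≠ w) (hvw : v ≠ w) :
    dist (z2 u v w) (ebas u) = Real.sqrt (9/16) := by
  rw [z2, ebas, dist_pt]
  rw [sumExcept {u, v, w} _ 0 ?_]
  · rw [Finset.sum_insert (by simp [huv, huw]), Finset.sum_insert (by simp [hvw]),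
      Finset.sum_singleton]
    congr 1
    simp [huv, huw, hvw, huv.symm, huw.symm, hvw.symm]
    norm_num
  · intro s hs; simp at hs; simp [hs.1, hs.2.1, hs.2.2]

lemma v20' (u v w : Fin N) (huv : u ≠ v) (huw : u ≠ w) (hvw : v ≠ w) :
    dist (z2 u v w) (ebas v) = Real.sqrt (9/16) := by
  rw [z2, ebas, dist_pt]
  rw [sumExcept {u, v, w} _ 0 ?_]
  · rw [Finset.sum_insert (by simp [huv, huw]), Finset.sum_insert (by simp [hvw]),
      Finset.sum_singleton]
    congr 1
    simp [huv, huw, hvw, huv.symm, huw.symm, hvw.symm]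
    norm_num
  · intro s hs; simp at hs; simp [hs.1, hs.2.1, hs.2.2]

lemma v21 (u v w : Fin N) (huv : u ≠ v) (huw : u ≠ w) (hvw : v ≠ w) :
    dist (z2 u v w) (ebas w) = Real.sqrt (17/16) := by
  rw [z2, ebas, dist_pt]
  rw [sumExcept {u, v, w} _ 0 ?_]
  · rw [Finset.sum_insert (by simp [huv, huw]), Finset.sum_insert (by simp [hvw]),
      Finset.sum_singleton]
    congr 1
    simp [huv, huw, hvw, huv.symm, huw.symm, hvw.symm]
    norm_num
  · intro s hs; simp at hs; simp [hs.1, hs.2.1, hs.2.2]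

lemma v22 (u v w x : Fin N) (huv : u ≠ v) (huw : u ≠ w) (hvw : v ≠ w)
    (hxu : x ≠ u) (hxv : x ≠ v) (hxw : x ≠ w) :
    dist (z2 u v w) (ebas x) = Real.sqrt (25/16) := by
  rw [z2, ebas, dist_pt]
  rw [sumExcept {u, v, w, x} _ 0 ?_]
  · rw [Finset.sum_insert (by simp [huv, huw, hxu.symm]),
      Finset.sum_insert (by simp [hvw, hxv.symm]),
      Finset.sum_insert (by simp [hxw.symm]), Finset.sum_singleton]
    congr 1
    simp [huv, huw, hvw, huv.symm, huw.symm, hvw.symm, hxu, hxv, hxw, hxu.symm, hxv.symm, hxw.symm]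
    norm_num
  · intro s hs; simp at hs; simp [hs.1, hs.2.1, hs.2.2.1, hs.2.2.2]

lemma v23 (r : ℝ) (u v w : Fin N) (huv : u ≠ v) (huw : u ≠ w) (hvw : v ≠ w) :
    dist (z2 u v w) (ycon N r) = Real.sqrt (2*(1/2-r)^2 + (1/4-r)^2 + ((N-3:ℕ):ℝ)*r^2) := by
  rw [z2, ycon, dist_pt]
  rw [sumExcept {u, v, w} _ ((0-r)^2) ?_]
  · rw [Finset.sum_insert (by simp [huv, huw]), Finset.sum_insert (by simp [hvw]),
      Finset.sum_singleton, card3 u v w huv huw hvw]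
    congr 1
    simp [huv, huw, hvw, huv.symm, huw.symm, hvw.symm]
    ring
  · intro s hs; simp at hs; simp [hs.1, hs.2.1, hs.2.2]

-- z3 values
lemma v30 (r : ℝ) (u : Fin N) : dist (z3 r u) (ebas u) = Real.sqrt (Qv N r) := by
  rw [z3, ebas, dist_pt]
  rw [sumExcept {u} _ ((r/2-0)^2) (by intro s hs; simp at hs; simp [hs])]
  congr 1
  rw [Qv]
  simp
  ring

lemma v31 (r : ℝ) (u : Fin N) : dist (z3 r u) (ycon N r) = Real.sqrt (Qv N r) := by
  rw [z3, ycon, dist_pt]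
  rw [sumExcept {u} _ ((r/2-r)^2) (by intro s hs; simp at hs; simp [hs])]
  congr 1
  rw [Qv]
  simp
  ring

lemma v32 (r : ℝ) (u w : Fin N) (huw : u ≠ w) :
    dist (z3 r u) (ebas w) = Real.sqrt (Qv N r + 1) := by
  have hN : 2 ≤ N := two_le u w huw
  have hc : (N-1:ℕ) = (N-2)+1 := by omega
  rw [z3, ebas, dist_pt]
  rw [sumExcept {u, w} _ ((r/2-0)^2) ?_]
  · rw [Finset.sum_insert (by simp [huw]), Finset.sum_singleton, Finset.card_pair huw]
    congr 1
    rw [Qv, hc]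
    push_cast
    simp [huw, huw.symm]
    ring
  · intro s hs; simp at hs; simp [hs.1, hs.2]

-- z4 values
lemma v40 (r : ℝ) (u v w : Fin N) (huv : u ≠ v) (huw : u ≠ w) (hvw : v ≠ w) :
    dist (z4 r u v w) (ebas u) = Real.sqrt (Qv N r + 1/8) := by
  have hN : 3 ≤ N := three_le u v w huv huw hvw
  have hc : (N-1:ℕ) = (N-3)+2 := by omega
  rw [z4, ebas, dist_pt]
  rw [sumExcept {u, v, w} _ ((r/2-0)^2) ?_]
  · rw [Finset.sum_insert (by simp [huv, huw]), Finset.sum_insert (by simp [hvw]),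
      Finset.sum_singleton, card3 u v w huv huw hvw]
    congr 1
    rw [Qv, hc]
    push_cast
    simp [huv, huw, hvw, huv.symm, huw.symm, hvw.symm]
    ring
  · intro s hs; simp at hs; simp [hs.1, hs.2.1, hs.2.2]

lemma v41 (r : ℝ) (u v w : Fin N) (huv : u ≠ v) (huw : u ≠ w) (hvw : v ≠ w) :
    dist (z4 r u v w) (ycon N r) = Real.sqrt (Qv N r + 1/8) := by
  have hN : 3 ≤ N := three_le u v w huv huw hvw
  have hc : (N-1:ℕ) = (N-3)+2 := by omega
  rw [z4, ycon, dist_pt]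
  rw [sumExcept {u, v, w} _ ((r/2-r)^2) ?_]
  · rw [Finset.sum_insert (by simp [huv, huw]), Finset.sum_insert (by simp [hvw]),
      Finset.sum_singleton, card3 u v w huv huw hvw]
    congr 1
    rw [Qv, hc]
    push_cast
    simp [huv, huw, hvw, huv.symm, huw.symm, hvw.symm]
    ring
  · intro s hs; simp at hs; simp [hs.1, hs.2.1, hs.2.2]

lemma v42 (r : ℝ) (u v w : Fin N) (huv : u ≠ v) (huw : u ≠ w) (hvw : v ≠ w) :
    dist (z4 r u v w) (ebas v) = Real.sqrt (Qv N r + 5/8) := by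
  have hN : 3 ≤ N := three_le u v w huv huw hvw
  have hc : (N-1:ℕ) = (N-3)+2 := by omega
  rw [z4, ebas, dist_pt]
  rw [sumExcept {u, v, w} _ ((r/2-0)^2) ?_]
  · rw [Finset.sum_insert (by simp [huv, huw]), Finset.sum_insert (by simp [hvw]),
      Finset.sum_singleton, card3 u v w huv huw hvw]
    congr 1
    rw [Qv, hc]
    push_cast
    simp [huv, huw, hvw, huv.symm, huw.symm, hvw.symm]
    ring
  · intro s hs; simp at hs; simp [hs.1, hs.2.1, hs.2.2]

lemma v43 (r : ℝ) (u v w : Fin N) (huv : u ≠ v) (huw : u ≠ w) (hvw : v ≠ w) :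
    dist (z4 r u v w) (ebas w) = Real.sqrt (Qv N r + 13/8) := by
  have hN : 3 ≤ N := three_le u v w huv huw hvw
  have hc : (N-1:ℕ) = (N-3)+2 := by omega
  rw [z4, ebas, dist_pt]
  rw [sumExcept {u, v, w} _ ((r/2-0)^2) ?_]
  · rw [Finset.sum_insert (by simp [huv, huw]), Finset.sum_insert (by simp [hvw]),
      Finset.sum_singleton, card3 u v w huv huw hvw]
    congr 1
    rw [Qv, hc]
    push_cast
    simp [huv, huw, hvw, huv.symm, huw.symm, hvw.symm]
    ring
  · intro s hs; simp at hs; simp [hs.1, hs.2.1, hs.2.2]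

lemma v44 (r : ℝ) (u v w x : Fin N) (huv : u ≠ v) (huw : u ≠ w) (hvw : v ≠ w)
    (hxu : x ≠ u) (hxv : x ≠ v) (hxw : x ≠ w) :
    dist (z4 r u v w) (ebas x) = Real.sqrt (Qv N r + 9/8) := by
  have hN : 4 ≤ N := four_le u v w x huv huw hvw hxu hxv hxw
  have hc : (N-1:ℕ) = (N-4)+3 := by omega
  have hcard : ({u, v, w, x} : Finset (Fin N)).card = 4 := by
    rw [Finset.card_insert_of_notMem (by simp [huv, huw, hxu.symm]),
      Finset.card_insert_of_notMem (by simp [hvw, hxv.symm]), Finset.card_pair (Ne.symm hxw)]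
  rw [z4, ebas, dist_pt]
  rw [sumExcept {u, v, w, x} _ ((r/2-0)^2) ?_]
  · rw [Finset.sum_insert (by simp [huv, huw, hxu.symm]),
      Finset.sum_insert (by simp [hvw, hxv.symm]),
      Finset.sum_insert (by simp [hxw.symm]), Finset.sum_singleton, hcard]
    congr 1
    rw [Qv, hc]
    push_cast
    simp [huv, huw, hvw, huv.symm, huw.symm, hvw.symm, hxu, hxv, hxw, hxu.symm, hxv.symm, hxw.symm]
    ring
  · intro s hs; simp at hs; simp [hs.1, hs.2.1, hs.2.2.1, hs.2.2.2]

section Near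
variable {m : ℕ} {r : ℝ}

lemma cast2le (hm : 3 ≤ m) : (2:ℝ) ≤ ((m-1:ℕ):ℝ) := by
  exact_mod_cast (by omega : 2 ≤ m-1)

lemma near0 (hm : 3 ≤ m) (hr : 2 < r) (k : Fin m) :
    (1:ℝ) ≤ dist (z0 (m-1)) (multiCand m r k) := by
  by_cases hk : (k:ℕ) < m-1
  · rw [mc_eq_ebas r k hk, v00]
  · rw [mc_eq_ycon r k hk, v01]
    have h1 := cast2le hm
    calc (1:ℝ) = Real.sqrt 1 := Real.sqrt_one.symm
    _ ≤ _ := Real.sqrt_le_sqrt (by nlinarith)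

lemma near1 (hm : 3 ≤ m) (hr : 2 < r) (u v : Fin (m-1)) (huv : u ≠ v) (k : Fin m) :
    Real.sqrt (1/2) ≤ dist (z1 u v) (multiCand m r k) := by
  by_cases hk : (k:ℕ) < m-1
  · rcases eq_or_ne (⟨(k:ℕ), hk⟩ : Fin (m-1)) u with h | h
    · rw [mc_eq_ebas r k hk, h, v10 u v huv]
    · rcases eq_or_ne (⟨(k:ℕ), hk⟩ : Fin (m-1)) v with h2 | h2
      · rw [mc_eq_ebas r k hk, h2, v10' u v huv]
      · rw [mc_eq_ebas r k hk, v11 u v _ huv h h2]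
        exact Real.sqrt_le_sqrt (by norm_num)
  · rw [mc_eq_ycon r k hk, v12 r u v huv]
    have h0 : (0:ℝ) ≤ ((m-1-2:ℕ):ℝ)*r^2 := mul_nonneg (Nat.cast_nonneg _) (sq_nonneg _)
    exact Real.sqrt_le_sqrt (by nlinarith)

lemma near2 (hm : 3 ≤ m) (hr : 2 < r) (u v w : Fin (m-1)) (huv : u ≠ v) (huw : u ≠ w)
    (hvw : v ≠ w) (k : Fin m) :
    Real.sqrt (9/16) ≤ dist (z2 u v w) (multiCand m r k) := by
  by_cases hk : (k:ℕ) < m-1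
  · rcases eq_or_ne (⟨(k:ℕ), hk⟩ : Fin (m-1)) u with h | h
    · rw [mc_eq_ebas r k hk, h, v20 u v w huv huw hvw]
    · rcases eq_or_ne (⟨(k:ℕ), hk⟩ : Fin (m-1)) v with h2 | h2
      · rw [mc_eq_ebas r k hk, h2, v20' u v w huv huw hvw]
      · rcases eq_or_ne (⟨(k:ℕ), hk⟩ : Fin (m-1)) w with h3 | h3
        · rw [mc_eq_ebas r k hk, h3, v21 u v w huv huw hvw]
          exact Real.sqrt_le_sqrt (by norm_num)
        · rw [mc_eq_ebas r k hk, v22 u v w _ huv huw hvw h h2 h3]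
          exact Real.sqrt_le_sqrt (by norm_num)
  · rw [mc_eq_ycon r k hk, v23 r u v w huv huw hvw]
    have h0 : (0:ℝ) ≤ ((m-1-3:ℕ):ℝ)*r^2 := mul_nonneg (Nat.cast_nonneg _) (sq_nonneg _)
    exact Real.sqrt_le_sqrt (by nlinarith)

lemma near3 (hm : 3 ≤ m) (hr : 2 < r) (u : Fin (m-1)) (k : Fin m) :
    Real.sqrt (Qv (m-1) r) ≤ dist (z3 r u) (multiCand m r k) := by
  by_cases hk : (k:ℕ) < m-1
  · rcases eq_or_ne (⟨(k:ℕ), hk⟩ : Fin (m-1)) u with h | h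
    · rw [mc_eq_ebas r k hk, h, v30 r u]
    · rw [mc_eq_ebas r k hk, v32 r u _ (Ne.symm h)]
      exact Real.sqrt_le_sqrt (by nlinarith [Qv_nonneg (m-1) r])
  · rw [mc_eq_ycon r k hk, v31 r u]

lemma near4 (hm : 3 ≤ m) (hr : 2 < r) (u v w : Fin (m-1)) (huv : u ≠ v) (huw : u ≠ w)
    (hvw : v ≠ w) (k : Fin m) :
    Real.sqrt (Qv (m-1) r + 1/8) ≤ dist (z4 r u v w) (multiCand m r k) := by
  by_cases hk : (k:ℕ) < m-1
  · rcases eq_or_ne (⟨(k:ℕ), hk⟩ : Fin (m-1)) u with h | h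
    · rw [mc_eq_ebas r k hk, h, v40 r u v w huv huw hvw]
    · rcases eq_or_ne (⟨(k:ℕ), hk⟩ : Fin (m-1)) v with h2 | h2
      · rw [mc_eq_ebas r k hk, h2, v42 r u v w huv huw hvw]
        exact Real.sqrt_le_sqrt (by norm_num)
      · rcases eq_or_ne (⟨(k:ℕ), hk⟩ : Fin (m-1)) w with h3 | h3
        · rw [mc_eq_ebas r k hk, h3, v43 r u v w huv huw hvw]
          exact Real.sqrt_le_sqrt (by norm_num)
        · rw [mc_eq_ebas r k hk, v44 r u v w _ huv huw hvw h h2 h3]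
          exact Real.sqrt_le_sqrt (by norm_num)
  · rw [mc_eq_ycon r k hk, v41 r u v w huv huw hvw]

end Near

end AuxRD

namespace AuxRD
open Finset

section Mech
variable {m n : ℕ} {r : ℝ} (f : (Fin n → Fin m) → Fin m → ℝ)

lemma spEq (hsp : RandSP1 (multiCand m r) f) (a : Fin n → Fin m) (i : Fin n) (j l : Fin m)
    (z : EuclideanSpace ℝ (Fin (m-1)))
    (hj : ∀ k, dist z (multiCand m r j) ≤ dist z (multiCand m r k))
    (hl : ∀ k, dist z (multiCand m r l) ≤ dist z (multiCand m r k)) :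
    expCost1 (multiCand m r) f (Function.update a i j) z
      = expCost1 (multiCand m r) f (Function.update a i l) z :=
  le_antisymm (hsp i z a j l hj) (hsp i z a l j hl)

lemma keyEq (hsp : RandSP1 (multiCand m r) f) (a : Fin n → Fin m) (i : Fin n) (j l : Fin m)
    (z : EuclideanSpace ℝ (Fin (m-1)))
    (hj : ∀ k, dist z (multiCand m r j) ≤ dist z (multiCand m r k))
    (hl : ∀ k, dist z (multiCand m r l) ≤ dist z (multiCand m r k)) :
    ∑ k, (f (Function.update a i l) k - f (Function.update a i j) k)
      * dist z (multiCand m r k) = 0 := by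
  have h := spEq f hsp a i j l z hj hl
  simp only [expCost1] at h
  have h2 : ∑ k, (f (Function.update a i l) k - f (Function.update a i j) k)
      * dist z (multiCand m r k)
      = ∑ k, f (Function.update a i l) k * dist z (multiCand m r k)
        - ∑ k, f (Function.update a i j) k * dist z (multiCand m r k) := by
    rw [← Finset.sum_sub_distrib]
    exact Finset.sum_congr rfl fun k _ => sub_mul _ _ _
  rw [h2, ← h, sub_self]

lemma classSum {m' : ℕ} (T : Finset (Fin m')) (δ d : Fin m' → ℝ) (ρ : ℝ)
    (h : ∀ k ∉ T, d k = ρ) (hsum : ∑ k, δ k = 0) (hkey : ∑ k, δ k * d k = 0) :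
    ∑ k ∈ T, δ k * (d k - ρ) = 0 := by
  have h2 : ∑ k, δ k * (d k - ρ) = 0 := by
    have h3 : ∑ k, δ k * (d k - ρ) = ∑ k, δ k * d k - ρ * ∑ k, δ k := by
      rw [Finset.mul_sum, ← Finset.sum_sub_distrib]
      exact Finset.sum_congr rfl fun k _ => by ring
    rw [h3, hkey, hsum]; ring
  rw [← sum_support T _ (fun k hk => by rw [h k hk]; ring)]
  exact h2

lemma lt_of_ne_last {m : ℕ} (hm : 3 ≤ m) (k : Fin m) (h : k ≠ ⟨m-1, by omega⟩) :
    (k:ℕ) < m-1 := by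
  have h1 := k.isLt
  have h2 : (k:ℕ) ≠ m-1 := fun hh => h (Fin.ext hh)
  omega

lemma coord_ne {m : ℕ} {j k : Fin m} (hj : (j:ℕ) < m-1) (hk : (k:ℕ) < m-1) (h : k ≠ j) :
    (⟨(k:ℕ), hk⟩ : Fin (m-1)) ≠ ⟨(j:ℕ), hj⟩ := by
  intro hh
  exact h (Fin.ext (by simpa using congrArg Fin.val hh))

lemma sqrt_concave (x : ℝ) (hx : 0 ≤ x) :
    Real.sqrt (x + 5/8) + Real.sqrt (x + 13/8) < 2 * Real.sqrt (x + 9/8) := by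
  set A := Real.sqrt (x + 5/8) with hAdef
  set B := Real.sqrt (x + 13/8) with hBdef
  set ρ := Real.sqrt (x + 9/8) with hρdef
  have hA2 : A^2 = x + 5/8 := Real.sq_sqrt (by linarith)
  have hB2 : B^2 = x + 13/8 := Real.sq_sqrt (by linarith)
  have hρ2 : ρ^2 = x + 9/8 := Real.sq_sqrt (by linarith)
  have hAnn : 0 ≤ A := Real.sqrt_nonneg _
  have hBnn : 0 ≤ B := Real.sqrt_nonneg _
  have hρnn : 0 ≤ ρ := Real.sqrt_nonneg _
  have hprod : A * B < ρ^2 := by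
    have h1 : A * B = Real.sqrt ((x + 5/8) * (x + 13/8)) := (Real.sqrt_mul (by linarith) _).symm
    have h2 : (x + 5/8) * (x + 13/8) < (x + 9/8)^2 := by nlinarith
    have h3 : Real.sqrt ((x + 5/8) * (x + 13/8)) < Real.sqrt ((x + 9/8)^2) :=
      Real.sqrt_lt_sqrt (mul_nonneg (by linarith) (by linarith)) h2
    rw [Real.sqrt_sq (by linarith)] at h3
    rw [h1, hρ2]
    exact h3
  nlinarith

/-- swap between two basis candidates -/
lemma swap_bb (hm : 3 ≤ m) (hr : 2 < r) (hmech : IsRandMech1 f)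
    (hsp : RandSP1 (multiCand m r) f) (a : Fin n → Fin m) (i : Fin n) (j l : Fin m)
    (hj : (j:ℕ) < m-1) (hl : (l:ℕ) < m-1) (hjl : j ≠ l) :
    ∀ k, k ≠ j → k ≠ l → f (Function.update a i j) k = f (Function.update a i l) k := by
  set M : Fin m := ⟨m-1, by omega⟩ with hM
  set δ : Fin m → ℝ := fun k =>
    f (Function.update a i l) k - f (Function.update a i j) k with hδ
  have hMval : ¬ ((M:ℕ) < m-1) := by simp [hM]
  have hjM : j ≠ M := fun h => by rw [h] at hj; exact hMval hj
  have hlM : l ≠ M := fun h => by rw [h] at hl; exact hMval hl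
  have hyj : multiCand m r j = ebas ⟨(j:ℕ), hj⟩ := mc_eq_ebas r j hj
  have hyl : multiCand m r l = ebas ⟨(l:ℕ), hl⟩ := mc_eq_ebas r l hl
  have hyM : multiCand m r M = ycon (m-1) r := mc_eq_ycon r M hMval
  have huv : (⟨(l:ℕ), hl⟩ : Fin (m-1)) ≠ ⟨(j:ℕ), hj⟩ := coord_ne hj hl hjl.symm
  have δsum : ∑ k, δ k = 0 := by
    simp [hδ, Finset.sum_sub_distrib, (hmech _).2]
  have h2cast := cast2le hm
  -- Step 0 : δ M = 0
  have hδM : δ M = 0 := by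
    have key := keyEq f hsp a i j l (z0 (m-1))
      (fun k => by rw [hyj, v00]; exact near0 hm hr k)
      (fun k => by rw [hyl, v00]; exact near0 hm hr k)
    have cs := classSum {M} δ (fun k => dist (z0 (m-1)) (multiCand m r k)) 1
      (fun k hk => by
        have hk' : (k:ℕ) < m-1 := lt_of_ne_last hm k (by simpa using hk)
        beta_reduce
        rw [mc_eq_ebas r k hk', v00]) δsum key
    rw [Finset.sum_singleton] at cs
    beta_reduce at cs
    rw [hyM, v01] at cs
    have hgt : (1:ℝ) < Real.sqrt (((m-1:ℕ):ℝ) * r^2) := by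
      rw [show (1:ℝ) = Real.sqrt 1 from Real.sqrt_one.symm]
      exact Real.sqrt_lt_sqrt (by norm_num) (by nlinarith)
    rcases mul_eq_zero.mp cs with h | h
    · exact h
    · exact absurd h (by intro hh; nlinarith)
  -- Step 1 : δ j + δ l = 0
  have hsum_jl : δ j + δ l = 0 := by
    have key := keyEq f hsp a i j l (z1 ⟨(l:ℕ), hl⟩ ⟨(j:ℕ), hj⟩)
      (fun k => by rw [hyj, v10' _ _ huv]; exact near1 hm hr _ _ huv k)
      (fun k => by rw [hyl, v10 _ _ huv]; exact near1 hm hr _ _ huv k)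
    have cs := classSum {j, l, M} δ
      (fun k => dist (z1 ⟨(l:ℕ), hl⟩ ⟨(j:ℕ), hj⟩) (multiCand m r k)) (Real.sqrt (3/2))
      (fun k hk => by
        simp only [Finset.mem_insert, Finset.mem_singleton, not_or] at hk
        have hk' : (k:ℕ) < m-1 := lt_of_ne_last hm k hk.2.2
        beta_reduce
        rw [mc_eq_ebas r k hk', v11 _ _ _ huv (coord_ne hl hk' hk.2.1) (coord_ne hj hk' hk.1)])
      δsum key
    rw [Finset.sum_insert (by simp [hjl, hjM]), Finset.sum_insert (by simp [hlM]),
      Finset.sum_singleton] at cs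
    beta_reduce at cs
    rw [hyj, hyl, hyM, v10' _ _ huv, v10 _ _ huv, v12 r _ _ huv] at cs
    have hfac : Real.sqrt (1/2) - Real.sqrt (3/2) ≠ 0 := by
      have := Real.sqrt_lt_sqrt (show (0:ℝ) ≤ 1/2 by norm_num) (show (1/2:ℝ) < 3/2 by norm_num)
      intro hh; nlinarith
    have hfin : (δ j + δ l) * (Real.sqrt (1/2) - Real.sqrt (3/2)) = 0 := by
      rw [hδM] at cs
      linear_combination cs
    rcases mul_eq_zero.mp hfin with h | h
    · exact h
    · exact absurd h hfac
  -- Step 2 : the conclusion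
  intro k hkj hkl
  have hgoal : δ k = 0 → f (Function.update a i j) k = f (Function.update a i l) k := by
    intro h; have := sub_eq_zero.mp h; linarith [this]
  apply hgoal
  by_cases hkM : k = M
  · rw [hkM]; exact hδM
  have hk : (k:ℕ) < m-1 := lt_of_ne_last hm k hkM
  have hyk : multiCand m r k = ebas ⟨(k:ℕ), hk⟩ := mc_eq_ebas r k hk
  have hwu : (⟨(k:ℕ), hk⟩ : Fin (m-1)) ≠ ⟨(l:ℕ), hl⟩ := coord_ne hl hk hkl
  have hwv : (⟨(k:ℕ), hk⟩ : Fin (m-1)) ≠ ⟨(j:ℕ), hj⟩ := coord_ne hj hk hkj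
  have key := keyEq f hsp a i j l (z2 ⟨(l:ℕ), hl⟩ ⟨(j:ℕ), hj⟩ ⟨(k:ℕ), hk⟩)
    (fun k' => by
      rw [hyj, v20' _ _ _ huv hwu.symm hwv.symm]
      exact near2 hm hr _ _ _ huv hwu.symm hwv.symm k')
    (fun k' => by
      rw [hyl, v20 _ _ _ huv hwu.symm hwv.symm]
      exact near2 hm hr _ _ _ huv hwu.symm hwv.symm k')
  have cs := classSum {j, l, k, M} δ
    (fun k' => dist (z2 ⟨(l:ℕ), hl⟩ ⟨(j:ℕ), hj⟩ ⟨(k:ℕ), hk⟩) (multiCand m r k'))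
    (Real.sqrt (25/16))
    (fun k' hk' => by
      simp only [Finset.mem_insert, Finset.mem_singleton, not_or] at hk'
      have hk'' : (k':ℕ) < m-1 := lt_of_ne_last hm k' hk'.2.2.2
      beta_reduce
      rw [mc_eq_ebas r k' hk'',
        v22 _ _ _ _ huv hwu.symm hwv.symm (coord_ne hl hk'' hk'.2.1) (coord_ne hj hk'' hk'.1)
          (coord_ne hk hk'' hk'.2.2.1)])
    δsum key
  rw [Finset.sum_insert (by simp [hjl, hjM, hkj.symm]),
    Finset.sum_insert (by simp [hlM, hkl.symm]),
    Finset.sum_insert (by simp [hkM]), Finset.sum_singleton] at cs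
  beta_reduce at cs
  rw [hyj, hyl, hyk, hyM, v20' _ _ _ huv hwu.symm hwv.symm, v20 _ _ _ huv hwu.symm hwv.symm,
    v21 _ _ _ huv hwu.symm hwv.symm, v23 r _ _ _ huv hwu.symm hwv.symm] at cs
  have hfac : Real.sqrt (17/16) - Real.sqrt (25/16) ≠ 0 := by
    have := Real.sqrt_lt_sqrt (show (0:ℝ) ≤ 17/16 by norm_num)
      (show (17/16:ℝ) < 25/16 by norm_num)
    intro hh; nlinarith
  have hfin : δ k * (Real.sqrt (17/16) - Real.sqrt (25/16)) = 0 := by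
    rw [hδM] at cs
    linear_combination cs - (Real.sqrt (9/16) - Real.sqrt (25/16)) * hsum_jl
  rcases mul_eq_zero.mp hfin with h | h
  · exact h
  · exact absurd h hfac

/-- swap between a basis candidate and the last candidate -/
lemma swap_bM (hm : 3 ≤ m) (hr : 2 < r) (hmech : IsRandMech1 f)
    (hsp : RandSP1 (multiCand m r) f) (a : Fin n → Fin m) (i : Fin n) (j : Fin m)
    (hj : (j:ℕ) < m-1) :
    ∀ k, k ≠ j → k ≠ (⟨m-1, by omega⟩ : Fin m) →
      f (Function.update a i j) k = f (Function.update a i (⟨m-1, by omega⟩ : Fin m)) k := by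
  set M : Fin m := ⟨m-1, by omega⟩ with hM
  set δ : Fin m → ℝ := fun k =>
    f (Function.update a i M) k - f (Function.update a i j) k with hδ
  have hMval : ¬ ((M:ℕ) < m-1) := by simp [hM]
  have hjM : j ≠ M := fun h => by rw [h] at hj; exact hMval hj
  have hyj : multiCand m r j = ebas ⟨(j:ℕ), hj⟩ := mc_eq_ebas r j hj
  have hyM : multiCand m r M = ycon (m-1) r := mc_eq_ycon r M hMval
  have δsum : ∑ k, δ k = 0 := by
    simp [hδ, Finset.sum_sub_distrib, (hmech _).2]
  have hQ := Qv_nonneg (m-1) r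
  -- Step A : δ j + δ M = 0
  have hA : δ j + δ M = 0 := by
    have key := keyEq f hsp a i j M (z3 r ⟨(j:ℕ), hj⟩)
      (fun k => by rw [hyj, v30]; exact near3 hm hr _ k)
      (fun k => by rw [hyM, v31]; exact near3 hm hr _ k)
    have cs := classSum {j, M} δ
      (fun k => dist (z3 r ⟨(j:ℕ), hj⟩) (multiCand m r k)) (Real.sqrt (Qv (m-1) r + 1))
      (fun k hk => by
        simp only [Finset.mem_insert, Finset.mem_singleton, not_or] at hk
        have hk' : (k:ℕ) < m-1 := lt_of_ne_last hm k hk.2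
        beta_reduce
        rw [mc_eq_ebas r k hk', v32 r _ _ (coord_ne hj hk' hk.1).symm])
      δsum key
    rw [Finset.sum_insert (by simp [hjM]), Finset.sum_singleton] at cs
    beta_reduce at cs
    rw [hyj, hyM, v30, v31] at cs
    have hfac : Real.sqrt (Qv (m-1) r) - Real.sqrt (Qv (m-1) r + 1) ≠ 0 := by
      have := Real.sqrt_lt_sqrt hQ (show Qv (m-1) r < Qv (m-1) r + 1 by linarith)
      intro hh; nlinarith
    have hfin : (δ j + δ M) * (Real.sqrt (Qv (m-1) r) - Real.sqrt (Qv (m-1) r + 1)) = 0 := by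
      linear_combination cs
    rcases mul_eq_zero.mp hfin with h | h
    · exact h
    · exact absurd h hfac
  -- Step B : other coordinates
  intro k hkj hkM
  have hgoal : δ k = 0 → f (Function.update a i j) k = f (Function.update a i M) k := by
    intro h; have := sub_eq_zero.mp h; linarith [this]
  apply hgoal
  have hk : (k:ℕ) < m-1 := lt_of_ne_last hm k hkM
  have hyk : multiCand m r k = ebas ⟨(k:ℕ), hk⟩ := mc_eq_ebas r k hk
  have hkvj : (⟨(k:ℕ), hk⟩ : Fin (m-1)) ≠ ⟨(j:ℕ), hj⟩ := coord_ne hj hk hkj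
  by_cases hm4 : 4 ≤ m
  · -- choose a third basis candidate
    have hkj' : (k:ℕ) ≠ (j:ℕ) := fun hh => hkj (Fin.ext hh)
    obtain ⟨t, ht, htj, htk⟩ : ∃ t : ℕ, t < m-1 ∧ t ≠ (j:ℕ) ∧ t ≠ (k:ℕ) := by
      refine ⟨if 0 ≠ (j:ℕ) ∧ 0 ≠ (k:ℕ) then 0 else if 1 ≠ (j:ℕ) ∧ 1 ≠ (k:ℕ) then 1 else 2, ?_⟩
      split_ifs with h1 h2
      · exact ⟨by omega, h1.1, h1.2⟩
      · exact ⟨by omega, h2.1, h2.2⟩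
      · push_neg at h1 h2
        omega
    set k' : Fin m := ⟨t, by omega⟩ with hk'def
    have hk' : (k':ℕ) < m-1 := ht
    have hk'M : k' ≠ M := fun h => by
      have := congrArg Fin.val h
      simp [hk'def, hM] at this
      omega
    have hk'j : k' ≠ j := fun h => htj (by simpa [hk'def] using congrArg Fin.val h)
    have hk'k : k' ≠ k := fun h => htk (by simpa [hk'def] using congrArg Fin.val h)
    have hyk' : multiCand m r k' = ebas ⟨(k':ℕ), hk'⟩ := mc_eq_ebas r k' hk'
    have c1 : (⟨(k:ℕ), hk⟩ : Fin (m-1)) ≠ ⟨(k':ℕ), hk'⟩ := coord_ne hk' hk hk'k.symm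
    have c2 : (⟨(k':ℕ), hk'⟩ : Fin (m-1)) ≠ ⟨(j:ℕ), hj⟩ := coord_ne hj hk' hk'j
    set A := Real.sqrt (Qv (m-1) r + 5/8) with hAdef
    set B := Real.sqrt (Qv (m-1) r + 13/8) with hBdef
    set ρ := Real.sqrt (Qv (m-1) r + 9/8) with hρdef
    set E := Real.sqrt (Qv (m-1) r + 1/8) with hEdef
    -- first z4 instance : (u,v,w) = (j,k,k')
    have key1 := keyEq f hsp a i j M (z4 r ⟨(j:ℕ), hj⟩ ⟨(k:ℕ), hk⟩ ⟨(k':ℕ), hk'⟩)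
      (fun k2 => by
        rw [hyj, v40 r _ _ _ hkvj.symm c2.symm c1]
        exact near4 hm hr _ _ _ hkvj.symm c2.symm c1 k2)
      (fun k2 => by
        rw [hyM, v41 r _ _ _ hkvj.symm c2.symm c1]
        exact near4 hm hr _ _ _ hkvj.symm c2.symm c1 k2)
    have cs1 := classSum {j, k, k', M} δ
      (fun k2 => dist (z4 r ⟨(j:ℕ), hj⟩ ⟨(k:ℕ), hk⟩ ⟨(k':ℕ), hk'⟩) (multiCand m r k2)) ρ
      (fun k2 hk2 => by
        simp only [Finset.mem_insert, Finset.mem_singleton, not_or] at hk2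
        have hk2' : (k2:ℕ) < m-1 := lt_of_ne_last hm k2 hk2.2.2.2
        beta_reduce
        rw [mc_eq_ebas r k2 hk2', hρdef,
          v44 r _ _ _ _ hkvj.symm c2.symm c1 (coord_ne hj hk2' hk2.1)
            (coord_ne hk hk2' hk2.2.1) (coord_ne hk' hk2' hk2.2.2.1)])
      δsum key1
    rw [Finset.sum_insert (by simp [hjM, hkj.symm, hk'j.symm]),
      Finset.sum_insert (by simp [hkM, hk'k.symm]),
      Finset.sum_insert (by simp [hk'M]), Finset.sum_singleton] at cs1
    beta_reduce at cs1
    rw [hyj, hyM, hyk, hyk', v40 r _ _ _ hkvj.symm c2.symm c1,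
      v41 r _ _ _ hkvj.symm c2.symm c1, v42 r _ _ _ hkvj.symm c2.symm c1,
      v43 r _ _ _ hkvj.symm c2.symm c1, ← hAdef, ← hBdef, ← hEdef] at cs1
    have hEq1 : δ k * (A - ρ) + δ k' * (B - ρ) = 0 := by
      linear_combination cs1 - (E - ρ) * hA
    -- second z4 instance : (u,v,w) = (j,k',k)
    have key2 := keyEq f hsp a i j M (z4 r ⟨(j:ℕ), hj⟩ ⟨(k':ℕ), hk'⟩ ⟨(k:ℕ), hk⟩)
      (fun k2 => by
        rw [hyj, v40 r _ _ _ c2.symm hkvj.symm c1.symm]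
        exact near4 hm hr _ _ _ c2.symm hkvj.symm c1.symm k2)
      (fun k2 => by
        rw [hyM, v41 r _ _ _ c2.symm hkvj.symm c1.symm]
        exact near4 hm hr _ _ _ c2.symm hkvj.symm c1.symm k2)
    have cs2 := classSum {j, k', k, M} δ
      (fun k2 => dist (z4 r ⟨(j:ℕ), hj⟩ ⟨(k':ℕ), hk'⟩ ⟨(k:ℕ), hk⟩) (multiCand m r k2)) ρ
      (fun k2 hk2 => by
        simp only [Finset.mem_insert, Finset.mem_singleton, not_or] at hk2
        have hk2' : (k2:ℕ) < m-1 := lt_of_ne_last hm k2 hk2.2.2.2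
        beta_reduce
        rw [mc_eq_ebas r k2 hk2', hρdef,
          v44 r _ _ _ _ c2.symm hkvj.symm c1.symm (coord_ne hj hk2' hk2.1)
            (coord_ne hk' hk2' hk2.2.1) (coord_ne hk hk2' hk2.2.2.1)])
      δsum key2
    rw [Finset.sum_insert (by simp [hjM, hkj.symm, hk'j.symm]),
      Finset.sum_insert (by simp [hk'M, hk'k]),
      Finset.sum_insert (by simp [hkM]), Finset.sum_singleton] at cs2
    beta_reduce at cs2
    rw [hyj, hyM, hyk, hyk', v40 r _ _ _ c2.symm hkvj.symm c1.symm,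
      v41 r _ _ _ c2.symm hkvj.symm c1.symm, v42 r _ _ _ c2.symm hkvj.symm c1.symm,
      v43 r _ _ _ c2.symm hkvj.symm c1.symm, ← hAdef, ← hBdef, ← hEdef] at cs2
    have hEq2 : δ k' * (A - ρ) + δ k * (B - ρ) = 0 := by
      linear_combination cs2 - (E - ρ) * hA
    -- combine
    clear cs1 cs2 key1 key2 δsum hA
    have hABlt : A < B := Real.sqrt_lt_sqrt (by linarith) (by linarith)
    have hsumlt : A + B < 2 * ρ := sqrt_concave _ hQ
    have e1 : δ k + δ k' = 0 := by
      have s1 : (δ k + δ k') * (A + B - 2*ρ) = 0 := by linear_combination hEq1 + hEq2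
      rcases mul_eq_zero.mp s1 with h | h
      · exact h
      · exact absurd h (by intro hh; linarith)
    have e2 : δ k = δ k' := by
      have s2 : (δ k - δ k') * (A - B) = 0 := by linear_combination hEq1 - hEq2
      rcases mul_eq_zero.mp s2 with h | h
      · linarith [sub_eq_zero.mp h]
      · exact absurd h (by intro hh; linarith)
    linarith
  · -- m = 3
    have hm3 : m = 3 := by omega
    have huniv : ({j, k, M} : Finset (Fin m)) = Finset.univ := by
      apply Finset.eq_univ_of_card
      rw [Finset.card_insert_of_notMem (by simp [hkj.symm, hjM]),
        Finset.card_pair hkM, Fintype.card_fin, hm3]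
    have : ∑ k2 ∈ ({j, k, M} : Finset (Fin m)), δ k2 = 0 := by rw [huniv]; exact δsum
    rw [Finset.sum_insert (by simp [hkj.symm, hjM]),
      Finset.sum_insert (by simp [hkM]), Finset.sum_singleton] at this
    linarith

lemma swap_any (hm : 3 ≤ m) (hr : 2 < r) (hmech : IsRandMech1 f)
    (hsp : RandSP1 (multiCand m r) f) (a : Fin n → Fin m) (i : Fin n) (j l : Fin m) :
    ∀ k, k ≠ j → k ≠ l → f (Function.update a i j) k = f (Function.update a i l) k := by
  intro k hkj hkl
  by_cases hjl : j = l
  · rw [hjl]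
  by_cases hj : (j:ℕ) < m-1
  · by_cases hl : (l:ℕ) < m-1
    · exact swap_bb f hm hr hmech hsp a i j l hj hl hjl k hkj hkl
    · have hlM : l = (⟨m-1, by omega⟩ : Fin m) := by
        apply Fin.ext; have := l.isLt; simp only []; omega
      rw [hlM] at hkl ⊢
      exact swap_bM f hm hr hmech hsp a i j hj k hkj hkl
  · have hjM : j = (⟨m-1, by omega⟩ : Fin m) := by
      apply Fin.ext; have := j.isLt; simp only []; omega
    by_cases hl : (l:ℕ) < m-1
    · rw [hjM] at hkj ⊢
      exact (swap_bM f hm hr hmech hsp a i l hl k hkl hkj).symm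
    · exfalso
      apply hjl
      apply Fin.ext
      have h1 := j.isLt; have h2 := l.isLt
      omega

section Eps
variable (hm : 3 ≤ m) (hr : 2 < r) (hmech : IsRandMech1 f) (hsp : RandSP1 (multiCand m r) f)

/-- `G a i p q` : the probability gained by `q` when voter `i` switches from `p` to `q`. -/
noncomputable def Gfun (a : Fin n → Fin m) (i : Fin n) (p q : Fin m) : ℝ :=
  f (Function.update a i q) q - f (Function.update a i p) q

include hm hr hmech hsp

lemma eps_flip (a : Fin n → Fin m) (i : Fin n) (p q : Fin m) (hpq : p ≠ q) :
    Gfun f a i p q = f (Function.update a i p) p - f (Function.update a i q) p := by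
  have h1 := (hmech (Function.update a i p)).2
  have h2 := (hmech (Function.update a i q)).2
  have hsplit : ∀ b : Fin n → Fin m,
      ∑ k, f b k = f b p + f b q + ∑ k ∈ univ \ {p, q}, f b k := by
    intro b
    rw [← Finset.sum_sdiff (Finset.subset_univ {p, q}),
      Finset.sum_insert (by simp [hpq]), Finset.sum_singleton]
    ring
  have hrest : ∑ k ∈ univ \ {p, q}, f (Function.update a i p) k
      = ∑ k ∈ univ \ {p, q}, f (Function.update a i q) k := by
    refine Finset.sum_congr rfl fun k hk => ?_
    simp only [Finset.mem_sdiff, Finset.mem_insert, Finset.mem_singleton, not_or] at hk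
    exact swap_any f hm hr hmech hsp a i p q k hk.2.1 hk.2.2
  have e1 := hsplit (Function.update a i p)
  have e2 := hsplit (Function.update a i q)
  rw [h1] at e1; rw [h2] at e2
  rw [Gfun]
  linarith

lemma eps_tri2 (a : Fin n → Fin m) (i : Fin n) (j l k : Fin m)
    (hjl : j ≠ l) (hjk : j ≠ k) (hlk : l ≠ k) :
    Gfun f a i j k = Gfun f a i l k := by
  have h := swap_any f hm hr hmech hsp a i j l k hjk.symm hlk.symm
  rw [Gfun, Gfun, h]

lemma eps_tri1 (a : Fin n → Fin m) (i : Fin n) (j l k : Fin m)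
    (hjl : j ≠ l) (hjk : j ≠ k) (hlk : l ≠ k) :
    Gfun f a i j l = Gfun f a i j k := by
  rw [eps_flip f hm hr hmech hsp a i j l hjl, eps_flip f hm hr hmech hsp a i j k hjk]
  rw [swap_any f hm hr hmech hsp a i l k j hjl hjk]

lemma eps_symm (a : Fin n → Fin m) (i : Fin n) (p q : Fin m) (hpq : p ≠ q) :
    Gfun f a i p q = Gfun f a i q p := by
  rw [eps_flip f hm hr hmech hsp a i p q hpq, Gfun]

lemma eps_any_pair (a : Fin n → Fin m) (i : Fin n) (p q p' q' : Fin m)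
    (hpq : p ≠ q) (hpq' : p' ≠ q') :
    Gfun f a i p q = Gfun f a i p' q' := by
  by_cases hq'q : q' = q
  · subst hq'q
    by_cases hp'p : p' = p
    · subst hp'p; rfl
    · exact eps_tri2 f hm hr hmech hsp a i p p' q' (fun h => hp'p h.symm) hpq hpq'
  · by_cases hq'p : q' = p
    · subst hq'p
      by_cases hp'q : p' = q
      · subst hp'q
        exact eps_symm f hm hr hmech hsp a i q' p' hpq
      · calc Gfun f a i q' q
            = Gfun f a i p' q :=
              eps_tri2 f hm hr hmech hsp a i q' p' q (Ne.symm hpq') hpq hp'q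
          _ = Gfun f a i p' q' :=
              eps_tri1 f hm hr hmech hsp a i p' q q' hp'q hpq' (fun h => hq'q h.symm)
    · have h1 : Gfun f a i p q = Gfun f a i p q' := by
        by_cases hqq' : q = q'
        · rw [hqq']
        · exact eps_tri1 f hm hr hmech hsp a i p q q' hpq (fun h => hq'p h.symm) hqq'
      rw [h1]
      by_cases hp'p : p' = p
      · subst hp'p; rfl
      · exact eps_tri2 f hm hr hmech hsp a i p p' q' (fun h => hp'p h.symm)
          (fun h => hq'p h.symm) hpq'

/-- changing another voter's ballot does not change `Gfun` -/
lemma eps_other (a : Fin n → Fin m) (i i' : Fin n) (hii' : i ≠ i') (v : Fin m)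
    (p q : Fin m) (hpq : p ≠ q) :
    Gfun f (Function.update a i' v) i p q = Gfun f a i p q := by
  -- choose a coordinate c avoiding v and a i'
  obtain ⟨c, hcv, hca⟩ : ∃ c : Fin m, c ≠ v ∧ c ≠ a i' := by
    obtain ⟨t, ht, h1, h2⟩ : ∃ t : ℕ, t < m ∧ t ≠ (v:ℕ) ∧ t ≠ ((a i'):ℕ) := by
      refine ⟨if 0 ≠ (v:ℕ) ∧ 0 ≠ ((a i'):ℕ) then 0 else
        if 1 ≠ (v:ℕ) ∧ 1 ≠ ((a i'):ℕ) then 1 else 2, ?_⟩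
      split_ifs with ha hb
      · exact ⟨by omega, ha.1, ha.2⟩
      · exact ⟨by omega, hb.1, hb.2⟩
      · push_neg at ha hb; omega
    exact ⟨⟨t, ht⟩, fun h => h1 (congrArg Fin.val h), fun h => h2 (congrArg Fin.val h)⟩
  obtain ⟨c2, hc2⟩ : ∃ c2 : Fin m, c2 ≠ c := by
    rcases eq_or_ne c ⟨0, by omega⟩ with h | h
    · exact ⟨⟨1, by omega⟩, by rw [h]; intro hh; simpa using congrArg Fin.val hh⟩
    · exact ⟨⟨0, by omega⟩, fun hh => h (hh ▸ rfl)⟩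
  have hcomm : ∀ cc : Fin m, f (Function.update (Function.update a i' v) i cc) c
      = f (Function.update a i cc) c := by
    intro cc
    have hswap : Function.update (Function.update a i' v) i cc
        = Function.update (Function.update a i cc) i' v := by
      funext x
      simp only [Function.update_apply]
      split_ifs with h1 h2 <;> try rfl
      exact absurd (h1.symm.trans h2) hii'
    rw [hswap]
    have h2 := swap_any f hm hr hmech hsp (Function.update a i cc) i' v (a i') c hcv hca
    rw [h2]
    congr 1
    have h3 : (Function.update a i cc) i' = a i' := Function.update_of_ne (Ne.symm hii') cc a
    rw [← h3, Function.update_eq_self]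
  have e1 : Gfun f (Function.update a i' v) i c2 c = Gfun f a i c2 c := by
    rw [Gfun, Gfun, hcomm c, hcomm c2]
  calc Gfun f (Function.update a i' v) i p q
      = Gfun f (Function.update a i' v) i c2 c :=
        eps_any_pair f hm hr hmech hsp _ i p q c2 c hpq hc2
    _ = Gfun f a i c2 c := e1
    _ = Gfun f a i p q := eps_any_pair f hm hr hmech hsp a i c2 c p q hc2 hpq

lemma eps_profile_aux (c0 : Fin m) (p q : Fin m) (hpq : p ≠ q) (i : Fin n) :
    ∀ s : ℕ, ∀ a : Fin n → Fin m,
      (univ.filter (fun i' => i' ≠ i ∧ a i' ≠ c0)).card ≤ s →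
      Gfun f a i p q = Gfun f (fun _ => c0) i p q := by
  intro s
  induction s with
  | zero =>
    intro a ha
    have hempty : ∀ i', i' ≠ i → a i' = c0 := by
      intro i' hne
      by_contra hne2
      have hmem : i' ∈ univ.filter (fun i' => i' ≠ i ∧ a i' ≠ c0) := by simp [hne, hne2]
      have hc := Finset.card_pos.mpr ⟨i', hmem⟩
      omega
    have hupd : ∀ c : Fin m, Function.update a i c = Function.update (fun _ => c0) i c := by
      intro c; funext x
      rcases eq_or_ne x i with rfl | hx
      · simp
      · simp [Function.update_of_ne hx, hempty x hx]
    rw [Gfun, Gfun, hupd p, hupd q]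
  | succ s ih =>
    intro a ha
    by_cases hz : (univ.filter (fun i' => i' ≠ i ∧ a i' ≠ c0)).card = 0
    · exact ih a (by omega)
    · obtain ⟨i', hi'⟩ := Finset.card_pos.mp
        (show 0 < (univ.filter (fun i' => i' ≠ i ∧ a i' ≠ c0)).card by omega)
      simp only [Finset.mem_filter, Finset.mem_univ, true_and] at hi'
      obtain ⟨hi'i, hi'c⟩ := hi'
      set b := Function.update a i' c0 with hb
      have hab : a = Function.update b i' (a i') := by
        funext x; rcases eq_or_ne x i' with rfl | hx
        · simp [hb]
        · simp [hb, Function.update_of_ne hx]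
      have h1 : Gfun f a i p q = Gfun f b i p q := by
        conv_lhs => rw [hab]
        exact eps_other f hm hr hmech hsp b i i' (Ne.symm hi'i) (a i') p q hpq
      rw [h1]
      apply ih
      have hsub : (univ.filter (fun x => x ≠ i ∧ b x ≠ c0))
          = (univ.filter (fun x => x ≠ i ∧ a x ≠ c0)).erase i' := by
        ext x
        simp only [Finset.mem_filter, Finset.mem_erase, Finset.mem_univ, true_and, hb]
        constructor
        · rintro ⟨hxi, hxb⟩
          rcases eq_or_ne x i' with rfl | hx
          · rw [Function.update_self] at hxb; exact absurd rfl hxb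
          · rw [Function.update_of_ne hx] at hxb; exact ⟨hx, hxi, hxb⟩
        · rintro ⟨hx, hxi, hxa⟩
          exact ⟨hxi, by rwa [Function.update_of_ne hx]⟩
      rw [hsub, Finset.card_erase_of_mem (by simp [hi'i, hi'c])]
      omega

end Eps

lemma votes_update (a : Fin n → Fin m) (i : Fin n) (c k : Fin m) :
    votes (Function.update a i c) k + (if a i = k then 1 else 0)
      = votes a k + (if c = k then 1 else 0) := by
  unfold votes
  rw [Finset.card_filter, Finset.card_filter]
  have hsp' : ∀ b : Fin n → Fin m,
      (∑ i', if b i' = k then 1 else 0)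
        = (if b i = k then 1 else 0) + ∑ i' ∈ univ.erase i, (if b i' = k then 1 else 0) :=
    fun b => (Finset.add_sum_erase univ _ (Finset.mem_univ i)).symm
  rw [hsp' (Function.update a i c), hsp' a]
  have h2 : ∑ i' ∈ univ.erase i, (if Function.update a i c i' = k then 1 else 0)
      = ∑ i' ∈ univ.erase i, (if a i' = k then 1 else 0) :=
    Finset.sum_congr rfl fun x hx => by
      rw [Function.update_of_ne (Finset.mem_erase.mp hx).1]
  rw [h2, Function.update_self]
  ring

lemma votes_const (c k : Fin m) : votes (fun _ : Fin n => c) k = if c = k then n else 0 := by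
  unfold votes
  split_ifs with h
  · subst h; simp
  · simp [h]

lemma eps_voter (hanon : ∀ a a' : Fin n → Fin m, (∀ k, votes a k = votes a' k) → f a = f a')
    (c0 : Fin m) (i i0 : Fin n) (p q : Fin m) :
    Gfun f (fun _ => c0) i p q = Gfun f (fun _ => c0) i0 p q := by
  have hcnt : ∀ (c : Fin m) (k : Fin m), votes (Function.update (fun _ : Fin n => c0) i c) k
      = votes (Function.update (fun _ : Fin n => c0) i0 c) k := by
    intro c k
    have h1 := votes_update (fun _ : Fin n => c0) i c k
    have h2 := votes_update (fun _ : Fin n => c0) i0 c k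
    exact Nat.add_right_cancel (h1.trans h2.symm)
  rw [Gfun, Gfun, hanon _ _ (hcnt q), hanon _ _ (hcnt p)]

lemma mc_ne_of_ne (hm : 3 ≤ m) (hr : 2 < r) (c k : Fin m) (hck : c ≠ k) :
    multiCand m r c ≠ multiCand m r k := by
  intro h
  by_cases hc : (c:ℕ) < m-1
  · by_cases hk : (k:ℕ) < m-1
    · rw [mc_eq_ebas r c hc, mc_eq_ebas r k hk] at h
      have h2 := congrArg (· (⟨(c:ℕ), hc⟩ : Fin (m-1))) h
      simp [ebas, coord_ne hk hc hck] at h2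
    · rw [mc_eq_ebas r c hc, mc_eq_ycon r k hk] at h
      have h2 := congrArg (· (⟨(c:ℕ), hc⟩ : Fin (m-1))) h
      simp [ebas, ycon] at h2
      linarith
  · by_cases hk : (k:ℕ) < m-1
    · rw [mc_eq_ycon r c hc, mc_eq_ebas r k hk] at h
      have h2 := congrArg (· (⟨(k:ℕ), hk⟩ : Fin (m-1))) h
      simp [ebas, ycon] at h2
      linarith
    · refine hck (Fin.ext ?_)
      have h1 := c.isLt; have h2 := k.isLt
      omega

lemma opt1_zero (c : Fin m) :
    OPT1 (multiCand m r) (fun _ : Fin n => multiCand m r c) = 0 := by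
  have h0 : (0:ℝ) ∈ {x : ℝ | ∃ k : Fin m,
      x = scost1 (multiCand m r) k (fun _ : Fin n => multiCand m r c)} := by
    refine ⟨c, ?_⟩
    simp [scost1]
  have hlb : ∀ x ∈ {x : ℝ | ∃ k : Fin m,
      x = scost1 (multiCand m r) k (fun _ : Fin n => multiCand m r c)}, (0:ℝ) ≤ x := by
    rintro x ⟨k, rfl⟩
    exact Finset.sum_nonneg fun _ _ => dist_nonneg
  exact le_antisymm (csInf_le ⟨0, fun x hx => hlb x hx⟩ h0) (le_csInf ⟨0, h0⟩ hlb)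

lemma unanimity (hm : 3 ≤ m) (hr : 2 < r) (hmech : IsRandMech1 f) (hn : 1 ≤ n)
    (hfin : ∃ C : ℝ, ∀ (a : Fin n → Fin m) (x : Fin n → EuclideanSpace ℝ (Fin (m - 1))),
      Consistent (multiCand m r) a x →
        expSC1 (multiCand m r) f a x ≤ C * OPT1 (multiCand m r) x)
    (c : Fin m) : ∀ k, f (fun _ => c) k = if k = c then 1 else 0 := by
  obtain ⟨C, hC⟩ := hfin
  have hcons : Consistent (multiCand m r) (fun _ : Fin n => c)
      (fun _ : Fin n => multiCand m r c) :=
    fun i k => by simpa using dist_nonneg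
  have hle := hC (fun _ : Fin n => c) (fun _ : Fin n => multiCand m r c) hcons
  rw [opt1_zero (r := r) (n := n) c, mul_zero] at hle
  have hnn : ∀ k ∈ univ, (0:ℝ) ≤ f (fun _ => c) k
      * scost1 (multiCand m r) k (fun _ : Fin n => multiCand m r c) := fun k _ =>
    mul_nonneg ((hmech _).1 k) (Finset.sum_nonneg fun _ _ => dist_nonneg)
  have hzero : ∀ k ∈ univ, f (fun _ => c) k
      * scost1 (multiCand m r) k (fun _ : Fin n => multiCand m r c) = 0 := by
    rw [expSC1] at hle
    exact (Finset.sum_eq_zero_iff_of_nonneg hnn).mp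
      (le_antisymm hle (Finset.sum_nonneg hnn))
  have hoff : ∀ k, k ≠ c → f (fun _ => c) k = 0 := by
    intro k hkc
    have hz := hzero k (Finset.mem_univ k)
    have hpos : (0:ℝ) < scost1 (multiCand m r) k (fun _ : Fin n => multiCand m r c) := by
      rw [scost1, Finset.sum_const, Finset.card_univ, Fintype.card_fin, nsmul_eq_mul]
      have hd : (0:ℝ) < dist (multiCand m r c) (multiCand m r k) :=
        dist_pos.mpr (mc_ne_of_ne hm hr c k (Ne.symm hkc))
      have hn' : (0:ℝ) < (n:ℝ) := by exact_mod_cast (by omega : 0 < n)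
      positivity
    rcases mul_eq_zero.mp hz with h | h
    · exact h
    · exact absurd h (ne_of_gt hpos)
  intro k
  by_cases hkc : k = c
  · subst hkc
    have hs := (hmech (fun _ : Fin n => k)).2
    rw [← Finset.add_sum_erase univ _ (Finset.mem_univ k)] at hs
    have hrest : ∑ k' ∈ univ.erase k, f (fun _ : Fin n => k) k' = 0 :=
      Finset.sum_eq_zero fun k' hk' => hoff k' (Finset.mem_erase.mp hk').1
    rw [if_pos rfl]
    linarith
  · rw [if_neg hkc]
    exact hoff k hkc

end Mech
end AuxRD

end

open AuxRD

/-- On the instance `multiCand m r` (`m ≥ 3`, `r > 2`), every anonymous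
strategy-proof randomized single-winner scv mechanism with finite distortion
is the Random Dictator mechanism: each candidate is elected with probability
equal to its fraction of votes. -/
theorem stmt12 (m : ℕ) (hm : 3 ≤ m) (r : ℝ) (hr : 2 < r) (n : ℕ) (hn : 1 ≤ n)
    (f : (Fin n → Fin m) → Fin m → ℝ)
    (hmech : IsRandMech1 f)
    (hanon : ∀ a a' : Fin n → Fin m, (∀ k, votes a k = votes a' k) → f a = f a')
    (hsp : RandSP1 (multiCand m r) f)
    (hfin : ∃ C : ℝ, ∀ (a : Fin n → Fin m)
      (x : Fin n → EuclideanSpace ℝ (Fin (m - 1))),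
      Consistent (multiCand m r) a x →
        expSC1 (multiCand m r) f a x ≤ C * OPT1 (multiCand m r) x) :
    ∀ (a : Fin n → Fin m) (k : Fin m), f a k = (votes a k : ℝ) / (n : ℝ) := by
  classical
  set c0 : Fin m := ⟨0, by omega⟩ with hc0def
  set c1 : Fin m := ⟨1, by omega⟩ with hc1def
  have hc01 : c0 ≠ c1 := by
    intro h; simpa [hc0def, hc1def] using congrArg Fin.val h
  set i0 : Fin n := ⟨0, by omega⟩ with hi0def
  set d : ℝ := Gfun f (fun _ => c0) i0 c0 c1 with hd
  have hn0 : (n:ℝ) ≠ 0 := Nat.cast_ne_zero.mpr (by omega)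
  -- uniform value of Gfun
  have hGd : ∀ (a : Fin n → Fin m) (i : Fin n) (p q : Fin m), p ≠ q →
      Gfun f a i p q = d := by
    intro a i p q hpq
    rw [eps_any_pair f hm hr hmech hsp a i p q c0 c1 hpq hc01,
      eps_profile_aux f hm hr hmech hsp c0 c0 c1 hc01 i _ a (le_refl _),
      eps_voter f hanon c0 i i0 c0 c1]
  have hunan := unanimity f hm hr hmech hn hfin
  -- telescoping : (n:ℝ) * d = 1
  have hchain : ∀ t : ℕ, t ≤ n →
      f (fun i' : Fin n => if (i':ℕ) < t then c1 else c0) c1 = t * d := by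
    intro t
    induction t with
    | zero =>
      intro _
      have he : (fun i' : Fin n => if (i':ℕ) < 0 then c1 else c0) = fun _ => c0 := by
        funext x; simp
      rw [he, hunan c0 c1, if_neg (Ne.symm hc01)]
      simp
    | succ t iht =>
      intro ht
      set A : Fin n → Fin m := fun i' => if (i':ℕ) < t then c1 else c0 with hA
      set it : Fin n := ⟨t, by omega⟩ with hit
      have hA1 : (fun i' : Fin n => if (i':ℕ) < t+1 then c1 else c0)
          = Function.update A it c1 := by
        funext x
        rcases eq_or_ne x it with rfl | hx
        · simp [hit]
        · have hxval : (x:ℕ) ≠ t := fun h => hx (Fin.ext (by simpa [hit] using h))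
          rw [Function.update_of_ne hx]
          simp only [hA]
          by_cases hlt : (x:ℕ) < t
          · rw [if_pos (by omega), if_pos hlt]
          · rw [if_neg (by omega), if_neg hlt]
      have hA0 : A = Function.update A it c0 := by
        funext x
        rcases eq_or_ne x it with rfl | hx
        · rw [Function.update_self]
          simp [hA, hit]
        · rw [Function.update_of_ne hx]
      have hstep := hGd A it c0 c1 hc01
      simp only [Gfun] at hstep
      rw [hA1, show f (Function.update A it c1) c1
          = f (Function.update A it c0) c1 + d from by linarith, ← hA0, iht (by omega)]
      push_cast; ring
  have hdn : (n:ℝ) * d = 1 := by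
    have h1 := hchain n (le_refl n)
    have he : (fun i' : Fin n => if (i':ℕ) < n then c1 else c0) = fun _ => c1 := by
      funext x; simp [x.isLt]
    rw [he, hunan c1 c1, if_pos rfl] at h1
    linarith
  have hd1 : d = 1 / (n:ℝ) := by
    rw [eq_div_iff hn0]; linarith [hdn]
  -- main induction
  have main : ∀ s : ℕ, ∀ a : Fin n → Fin m,
      (univ.filter fun i => a i ≠ c0).card ≤ s →
      ∀ k, f a k = (votes a k : ℝ) / (n:ℝ) := by
    intro s
    induction s with
    | zero =>
      intro a ha k
      have hconst : a = fun _ => c0 := by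
        funext x
        by_contra hx
        have hmem : x ∈ univ.filter (fun i => a i ≠ c0) := by simp [hx]
        have := Finset.card_pos.mpr ⟨x, hmem⟩
        omega
      rw [hconst, hunan c0 k, votes_const (n := n) c0 k]
      by_cases hk : k = c0
      · rw [if_pos hk, if_pos hk.symm]
        exact (div_self hn0).symm
      · rw [if_neg hk, if_neg (fun h => hk h.symm)]
        simp
    | succ s ihs =>
      intro a ha k
      by_cases hz : (univ.filter fun i => a i ≠ c0).card = 0
      · exact ihs a (by omega) k
      obtain ⟨i, hi⟩ := Finset.card_pos.mp
        (show 0 < (univ.filter fun i => a i ≠ c0).card by omega)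
      simp only [Finset.mem_filter, Finset.mem_univ, true_and] at hi
      set j : Fin m := a i with hj
      set a' : Fin n → Fin m := Function.update a i c0 with ha'
      have ha'i : a' i = c0 := Function.update_self i c0 a
      have haeq : a = Function.update a' i j := by
        funext x
        rcases eq_or_ne x i with rfl | hx
        · simp [ha', hj]
        · simp [ha', Function.update_of_ne hx]
      have ha'eq : a' = Function.update a' i c0 := by
        funext x
        rcases eq_or_ne x i with rfl | hx
        · rw [Function.update_self, ha'i]
        · rw [Function.update_of_ne hx]
      have hcard : (univ.filter fun x => a' x ≠ c0).card ≤ s := by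
        have hsub : (univ.filter fun x => a' x ≠ c0)
            = (univ.filter fun x => a x ≠ c0).erase i := by
          ext x
          simp only [Finset.mem_filter, Finset.mem_erase, Finset.mem_univ, true_and, ha']
          constructor
          · intro hx
            rcases eq_or_ne x i with rfl | hxi
            · rw [Function.update_self] at hx; exact absurd rfl hx
            · rw [Function.update_of_ne hxi] at hx; exact ⟨hxi, hx⟩
          · rintro ⟨hxi, hx⟩
            rwa [Function.update_of_ne hxi]
        rw [hsub, Finset.card_erase_of_mem (by simp; exact hi)]
        omega
      have hIH := ihs a' hcard
      have hvt := votes_update a i c0 k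
      rw [← ha'] at hvt
      by_cases hkj : k = j
      · have hkc0 : k ≠ c0 := by rw [hkj, hj]; exact hi
        have hstep := hGd a' i c0 k (Ne.symm hkc0)
        simp only [Gfun] at hstep
        have hfa : f a k = f a' k + d := by
          rw [haeq, ← hkj]
          conv_rhs => rw [ha'eq]
          linarith
        have hv1 : votes a k = votes a' k + 1 := by
          rw [if_pos (by rw [← hj, ← hkj]), if_neg (fun h => hkc0 h.symm)] at hvt
          omega
        rw [hfa, hIH k, hv1, hd1]
        push_cast
        field_simp
      · by_cases hkc : k = c0
        · have hjc0 : j ≠ c0 := by rw [hj]; exact hi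
          have hstep := hGd a' i c0 j (Ne.symm hjc0)
          have hflip := eps_flip f hm hr hmech hsp a' i c0 j (Ne.symm hjc0)
          rw [hstep] at hflip
          have hfa : f a k = f a' k - d := by
            rw [haeq, hkc]
            conv_rhs => rw [ha'eq]
            linarith
          have hv2 : votes a' k = votes a k + 1 := by
            rw [if_neg (fun h => hkj (by rw [hj, ← h])), if_pos hkc.symm] at hvt
            omega
          rw [hfa, hIH k, hv2, hd1]
          push_cast
          field_simp
          ring
        · have hfk : f a k = f a' k := by
            rw [haeq]
            conv_rhs => rw [ha'eq]
            exact swap_any f hm hr hmech hsp a' i j c0 k hkj hkc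
          have hv3 : votes a k = votes a' k := by
            rw [if_neg (fun h => hkj (by rw [hj, ← h])),
              if_neg (fun h => hkc h.symm)] at hvt
            omega
          rw [hfk, hIH k, hv3]
  intro a k
  exact main _ a (le_refl _) k
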